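/- Let M be a 3CM, I an instance over the signature of R_M, I_n = Step^SO_n(I), n ≥ 0, and let a_i (for a ∈ adom(I), 0 ≤ i ≤ m_a, a₀ = a) be the terms of adom(I_n) as given by the chain structure of the S₀-atoms (adom(I_n) = {a_i} and the S₀-atoms of I_n are exactly {S₀(a,b) ∈ I} ∪ {S₀(a_{i+1}, a_i) : 0 ≤ i < m_a}). Then the Flood-atoms of I_n are exactly {Flood(a) : Flood(a) ∈ I or End(a) ∈ I} ∪ {Flood(a) : S(b, a) ∈ I or S₀(b, a) ∈ I for some b} ∪ {Flood(a_i) : a ∈ adom(I), 0 ≤ i < m_a}. -/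

import Mathlib

set_option maxHeartbeats 1000000
set_option synthInstance.maxHeartbeats 1000000
set_option synthInstance.maxSize 512

attribute [local instance] Classical.propDecidable

noncomputable section

/-! ### Terms and atoms -/

/-- Variables: ordinary variables `Sum.inl n`, or fresh variables `Sum.inr (c, k)`
introduced by the trigger with code `c` for the head variable with code `k`. -/
abbrev Var : Type := ℕ ⊕ (ℕ × ℕ)

/-- Terms: constants `Sum.inl c` or variables `Sum.inr v`. -/
abbrev FTerm : Type := ℕ ⊕ Var

def ct (n : ℕ) : FTerm := Sum.inl n
def vt (n : ℕ) : FTerm := Sum.inr (Sum.inl n)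

/-- An atom: a predicate name together with its list of arguments. -/
abbrev Atom : Type := ℕ × List FTerm

/-- Active domain: all terms occurring in an atom set. -/
def adom (J : Set Atom) : Set FTerm := {t | ∃ a ∈ J, t ∈ a.2}

def atomVarsF (a : Atom) : Finset Var := (a.2.filterMap Sum.getRight?).toFinset

def varsF (A : Finset Atom) : Finset Var := A.biUnion atomVarsF

def setVars (J : Set Atom) : Set Var := {v | ∃ a ∈ J, Sum.inr v ∈ a.2}

/-! ### Substitutions and homomorphisms -/

abbrev Subst := Var → FTerm

def applyT (σ : Subst) : FTerm → FTerm
  | Sum.inl c => Sum.inl c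
  | Sum.inr v => σ v

def applyA (σ : Subst) (a : Atom) : Atom := (a.1, a.2.map (applyT σ))

def IsHomOn (σ : Subst) (A B : Set Atom) : Prop := ∀ a ∈ A, applyA σ a ∈ B

def HomBetween (A B : Set Atom) : Prop := ∃ σ : Subst, IsHomOn σ A B

def IsRetraction (σ : Subst) (A B : Set Atom) : Prop :=
  IsHomOn σ A B ∧ ∀ v ∈ setVars A ∩ setVars B, σ v = Sum.inr v

/-- Isomorphism of atom sets: a pair of mutually inverse homomorphisms. -/
def Isomorphic (A B : Set Atom) : Prop :=
  ∃ σ τ : Subst, IsHomOn σ A B ∧ IsHomOn τ B A ∧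
    (∀ a ∈ A, applyA τ (applyA σ a) = a) ∧ (∀ b ∈ B, applyA σ (applyA τ b) = b)

/-! ### Rules -/

/-- A rule is a pair (body, head). Its existential variables are the head variables
not occurring in the body; its frontier the variables shared by body and head.
A rule is Datalog when every head variable occurs in the body. -/
abbrev Rule : Type := Finset Atom × Finset Atom

def frontierOf (R : Rule) : Finset Var := varsF R.1 ∩ varsF R.2

def DatRules (Rset : Finset Rule) : Finset Rule := Rset.filter fun R => varsF R.2 ⊆ varsF R.1
def NDatRules (Rset : Finset Rule) : Finset Rule := Rset.filter fun R => ¬ varsF R.2 ⊆ varsF R.1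

/-- Satisfaction of a rule in an atom set. -/
def SatisfiesRule (J : Set Atom) (R : Rule) : Prop :=
  ∀ σ : Subst, IsHomOn σ (R.1 : Set Atom) J →
    ∃ σ' : Subst, (∀ v ∈ varsF R.1, σ' v = σ v) ∧ IsHomOn σ' (R.2 : Set Atom) J

def IsModel (Rset : Finset Rule) (I J : Set Atom) : Prop :=
  (∀ R ∈ Rset, SatisfiesRule J R) ∧ HomBetween I J

/-- BCQ entailment: every model of the KB satisfies the query. -/
def Entails (Rset : Finset Rule) (I q : Set Atom) : Prop :=
  ∀ J : Set Atom, IsModel Rset I J → HomBetween q J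

def IsUniversalModel (Rset : Finset Rule) (I U : Set Atom) : Prop :=
  IsModel Rset I U ∧ ∀ J : Set Atom, IsModel Rset I J → HomBetween U J

/-! ### Triggers -/

structure Trigger where
  rule : Rule
  sub : Subst

/-- Injective code of a trigger (a trigger is determined by its rule and the
restriction of its substitution to the body variables). -/
def Trigger.code (t : Trigger) : ℕ :=
  Encodable.encode (t.rule, (varsF t.rule.1).image fun v => (v, t.sub v))

/-- The canonical extension of the trigger substitution, mapping each existential
variable `z` to the fresh variable unique for `z` and the trigger. -/
def Trigger.extSub (t : Trigger) : Subst := fun v =>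
  if v ∈ varsF t.rule.1 then t.sub v
  else Sum.inr (Sum.inr (t.code, Encodable.encode v))

def Trigger.out (t : Trigger) : Finset Atom := t.rule.2.image (applyA t.extSub)

def Trigger.isOn (t : Trigger) (J : Set Atom) : Prop := IsHomOn t.sub (t.rule.1 : Set Atom) J

/-! ### Chase variants, derivations, chase termination classes -/

inductive ChaseVariant : Type
  | O | SO | R | E
deriving DecidableEq

def Applicable : ChaseVariant → Trigger → Set Atom → Prop
  | .O, t, J => ¬ ((t.out : Set Atom) ⊆ J)
  | .SO, t, J => ∀ t' : Trigger, t'.rule = t.rule → t'.isOn J →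
      (∀ v ∈ frontierOf t.rule, t'.sub v = t.sub v) → ¬ ((t'.out : Set Atom) ⊆ J)
  | .R, t, J => ¬ ∃ σ : Subst, IsRetraction σ (J ∪ (t.out : Set Atom)) J
  | .E, t, J => ¬ ∃ σ : Subst, IsHomOn σ (J ∪ (t.out : Set Atom)) J

def instSeq (I : Set Atom) (steps : ℕ → Option Trigger) : ℕ → Set Atom
  | 0 => I
  | n + 1 => instSeq I steps n ∪
      (match steps n with
        | none => (∅ : Set Atom)
        | some t => (t.out : Set Atom))

/-- A (possibly infinite) derivation from the knowledge base `⟨Rset, I⟩`. -/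
structure Deriv (Rset : Finset Rule) (I : Set Atom) where
  steps : ℕ → Option Trigger
  prefix_closed : ∀ n, steps n = none → steps (n + 1) = none
  valid : ∀ n t, steps n = some t →
    t.rule ∈ Rset ∧ t.isOn (instSeq I steps n) ∧ ¬ ((t.out : Set Atom) ⊆ instSeq I steps n)

def Deriv.inst {Rset : Finset Rule} {I : Set Atom} (D : Deriv Rset I) (n : ℕ) :
    Set Atom := instSeq I D.steps n

def Deriv.res {Rset : Finset Rule} {I : Set Atom} (D : Deriv Rset I) : Set Atom :=
  ⋃ n, D.inst n

def Deriv.Finite {Rset : Finset Rule} {I : Set Atom} (D : Deriv Rset I) : Prop :=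
  ∃ n, D.steps n = none

def Deriv.IsX {Rset : Finset Rule} {I : Set Atom} (X : ChaseVariant)
    (D : Deriv Rset I) : Prop :=
  ∀ n t, D.steps n = some t → Applicable X t (D.inst n)

def Deriv.Fair {Rset : Finset Rule} {I : Set Atom} (X : ChaseVariant)
    (D : Deriv Rset I) : Prop :=
  ∀ i, ∀ t : Trigger, t.rule ∈ Rset → t.isOn (D.inst i) → Applicable X t (D.inst i) →
    ∃ j, i < j ∧ ¬ Applicable X t (D.inst j)

/-- All-instance, all-derivation chase termination. -/
def CTall (X : ChaseVariant) (Rset : Finset Rule) : Prop :=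
  ∀ I : Finset Atom, ∀ D : Deriv Rset (I : Set Atom), D.IsX X → D.Fair X → D.Finite

/-- All-instance, some-derivation chase termination. -/
def CTex (X : ChaseVariant) (Rset : Finset Rule) : Prop :=
  ∀ I : Finset Atom, ∃ D : Deriv Rset (I : Set Atom), D.IsX X ∧ D.Fair X ∧ D.Finite

inductive CTQuant : Type
  | all | ex

def CT (X : ChaseVariant) : CTQuant → Finset Rule → Prop
  | .all => CTall X
  | .ex => CTex X

/-- The result of some fair `X`-derivation from `⟨Rset, J⟩`. -/
def ChX (X : ChaseVariant) (Rset : Finset Rule) (J : Set Atom) : Set Atom :=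
  if h : ∃ D : Deriv Rset J, D.IsX X ∧ D.Fair X then h.choose.res else J

/-! ### Gaifman graph, treewidth, bts -/

def gaifmanAdj (J : Set Atom) (u v : FTerm) : Prop :=
  u ≠ v ∧ ∃ a ∈ J, u ∈ a.2 ∧ v ∈ a.2

/-- The (Gaifman graph of the) atom set `J` has treewidth at most `k`:
there is a tree decomposition all of whose bags have size at most `k + 1`. -/
def TreewidthAtMost (J : Set Atom) (k : ℕ) : Prop :=
  ∃ (ι : Type) (T : SimpleGraph ι) (bag : ι → Finset FTerm),
    T.Connected ∧ T.IsAcyclic ∧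
    (∀ v ∈ adom J, ∃ i, v ∈ bag i) ∧
    (∀ u v : FTerm, gaifmanAdj J u v → ∃ i, u ∈ bag i ∧ v ∈ bag i) ∧
    (∀ v : FTerm, (SimpleGraph.induce {i | v ∈ bag i} T).Preconnected) ∧
    (∀ i, (bag i).card ≤ k + 1)

/-- Bounded-treewidth sets: for every instance, some universal model of bounded treewidth. -/
def IsBts (Rset : Finset Rule) : Prop :=
  ∀ I : Finset Atom, ∃ (k : ℕ) (U : Set Atom),
    IsUniversalModel Rset (I : Set Atom) U ∧ TreewidthAtMost U k

/-! ### Three-counter machines -/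

/-- A three-counter machine: states `0, …, m − 1` (state `0` is initial, standing for `q₁`),
and a partial transition function given by a finite table. -/
structure TCM where
  m : ℕ
  hm : 0 < m
  δ : List ((ℕ × Bool × Bool) × (ℕ × Int × Int))
  keys_nodup : (δ.map Prod.fst).Nodup
  wf : ∀ e ∈ δ, e.1.1 < m ∧ e.2.1 < m ∧ e.2.2.1.natAbs ≤ 1 ∧ e.2.2.2.natAbs ≤ 1

/-- A configuration: state, two counters, and the time counter. -/
abbrev Config : Type := ℕ × ℕ × ℕ × ℕ

def TCM.step (M : TCM) (q : ℕ) (b1 b2 : Bool) : Option (ℕ × Int × Int) :=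
  (M.δ.find? fun e => decide (e.1 = (q, b1, b2))).map Prod.snd

def TCM.next (M : TCM) (C : Config) : Option Config :=
  match M.step C.1 (decide (C.2.1 ≠ 0)) (decide (C.2.2.1 ≠ 0)) with
  | none => none
  | some (q', d1, d2) =>
      some (q', ((C.2.1 : ℤ) + d1).toNat, ((C.2.2.1 : ℤ) + d2).toNat, C.2.2.2 + 1)

def TCM.run (M : TCM) : ℕ → Option Config
  | 0 => some (0, 0, 0, 0)
  | n + 1 => (M.run n).bind M.next

/-- The machine halts: some reachable configuration has no successor. -/
def TCM.Halts (M : TCM) : Prop := ∃ n C, M.run n = some C ∧ M.next C = none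

/-! ### Prime encoding of configurations -/

/-- The least prime strictly greater than `n` (computably). -/
def nextPrime (n : ℕ) : ℕ := Nat.find (Nat.exists_infinite_primes (n + 1))

/-- `prm i` is the `(i+1)`-st prime `p_{i+1}`, i.e. `prm 0 = 2`. -/
def prm : ℕ → ℕ
  | 0 => 2
  | k + 1 => nextPrime (prm k)

/-- Encoding of a configuration as a natural number. -/
def TCM.enc (M : TCM) (C : Config) : ℕ :=
  prm C.1 * prm M.m ^ C.2.1 * prm (M.m + 1) ^ C.2.2.1 * prm (M.m + 2) ^ C.2.2.2

/-- `p = p₁ ⋯ p_{m+3}`. -/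
def TCM.p (M : TCM) : ℕ := ∏ i ∈ Finset.range (M.m + 3), prm i

/-- Decode the state from a residue modulo `M.p`. -/
def TCM.stateOf (M : TCM) (i : ℕ) : Option ℕ :=
  (List.range M.m).find? fun s => decide (prm s ∣ i)

/-- The canonical pair `(q_i, r_i)` realizing the prime encoding of the transitions. -/
def TCM.qr (M : TCM) (i : ℕ) : ℕ × ℕ :=
  match M.stateOf i with
  | none => (1, 1)
  | some s =>
      let b1 : Bool := decide (prm M.m ∣ i)
      let b2 : Bool := decide (prm (M.m + 1) ∣ i)
      match M.step s b1 b2 with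
      | none => (1, 1)
      | some (s', d1, d2) =>
          let e1 : ℤ := if b1 then d1 else max d1 0
          let e2 : ℤ := if b2 then d2 else max d2 0
          let num : ℕ := prm s' * prm (M.m + 2) *
            (if e1 = 1 then prm M.m else 1) * (if e2 = 1 then prm (M.m + 1) else 1)
          let den : ℕ := prm s *
            (if e1 = -1 then prm M.m else 1) * (if e2 = -1 then prm (M.m + 1) else 1)
          (num / Nat.gcd num den, den / Nat.gcd num den)

def TCM.qi (M : TCM) (i : ℕ) : ℕ := (M.qr i).1
def TCM.ri (M : TCM) (i : ℕ) : ℕ := (M.qr i).2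

/-- `g(n) = q_{n mod p} · n / r_{n mod p}`. -/
def TCM.g (M : TCM) (n : ℕ) : ℕ := M.qi (n % M.p) * n / M.ri (n % M.p)

/-- `gᵏ(2)`. -/
def TCM.gIter (M : TCM) (k : ℕ) : ℕ := (M.g)^[k] 2

/-- `G = {gᵏ(2) : k ∈ ℕ}`. -/
def TCM.Gset (M : TCM) : Set ℕ := Set.range M.gIter

/-! ### The rule set `R_M` -/

def pEnd : ℕ := 0
def pFlood : ℕ := 1
def pS0 : ℕ := 2
def pS : ℕ := 3
def pG : ℕ := 4
def pR (i : ℕ) : ℕ := 5 + 2 * i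
def pT (i : ℕ) : ℕ := 6 + 2 * i

/-- `j`-th vertex of an `S`-path of length `n` from variable `a` to variable `b`
with fresh intermediate variables `base + 1, …, base + n − 1`. -/
def pathVar (a b base n j : ℕ) : FTerm :=
  if j = 0 then vt a else if j = n then vt b else vt (base + j)

/-- The atoms of `Sⁿ(x_a, x_b)`: an `S`-path of length `n`. -/
def spath (a b base n : ℕ) : Finset Atom :=
  (Finset.range n).image fun j =>
    (pS, [pathVar a b base n j, pathVar a b base n (j + 1)])

/-- Rule (1): `S₀(x,y) → S(x,y)`. -/
def ruleS : Rule := ({(pS0, [vt 0, vt 1])}, {(pS, [vt 0, vt 1])})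

/-- Rule (2): `R_i(x,y) ∧ S(y,z) → R_{i+1}(x,z)` (indices modulo `p`). -/
def ruleR (M : TCM) (i : ℕ) : Rule :=
  ({(pR i, [vt 0, vt 1]), (pS, [vt 1, vt 2])}, {(pR ((i + 1) % M.p), [vt 0, vt 2])})

/-- Rule (3): `T_i(x,y,z) ∧ S^{r_i}(y,y′) ∧ S^{q_i}(z,z′) → T_i(x,y′,z′)`. -/
def ruleT (M : TCM) (i : ℕ) : Rule :=
  (({(pT i, [vt 0, vt 1, vt 2])} : Finset Atom) ∪ spath 1 3 10 (M.ri i) ∪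
      spath 2 4 (11 + M.ri i) (M.qi i),
    {(pT i, [vt 0, vt 3, vt 4])})

/-- Rule (4): `S(x,y) → Flood(y)`. -/
def ruleFloodProp : Rule := ({(pS, [vt 0, vt 1])}, {(pFlood, [vt 1])})

/-- Rule (5): `End(x) → S(x,x)`. -/
def ruleSEnd : Rule := ({(pEnd, [vt 0])}, {(pS, [vt 0, vt 0])})

/-- Rule (6): `S²(x,y) → G(x,y)`. -/
def ruleGInit : Rule := (spath 0 1 10 2, {(pG, [vt 0, vt 1])})

/-- Rule (7): `G(x,y) ∧ R_i(x,y) ∧ T_i(x,y,z) → G(x,z)`. -/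
def ruleGStep (i : ℕ) : Rule :=
  ({(pG, [vt 0, vt 1]), (pR i, [vt 0, vt 1]), (pT i, [vt 0, vt 1, vt 2])},
    {(pG, [vt 0, vt 2])})

/-- Rule (8): `Flood(x) ∧ Flood(y) ∧ Flood(z) → G(x,y) ∧ ⋀_{j<p} (R_j(x,y) ∧ T_j(x,y,z))`. -/
def ruleFloodGen (M : TCM) : Rule :=
  ({(pFlood, [vt 0]), (pFlood, [vt 1]), (pFlood, [vt 2])},
    ({(pG, [vt 0, vt 1])} : Finset Atom) ∪
      (Finset.range M.p).biUnion fun j =>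
        {(pR j, [vt 0, vt 1]), (pT j, [vt 0, vt 1, vt 2])})

/-- Rule (9): `G(y,z) ∧ End(z) → ∃x (S₀(x,y) ∧ R₀(x,x) ∧ ⋀_{j<p} T_j(x,x,x))`. -/
def ruleEx (M : TCM) : Rule :=
  ({(pG, [vt 1, vt 2]), (pEnd, [vt 2])},
    ({(pS0, [vt 0, vt 1]), (pR 0, [vt 0, vt 0])} : Finset Atom) ∪
      (Finset.range M.p).biUnion fun j => {(pT j, [vt 0, vt 0, vt 0])})

/-- The rule set `R_M`. -/
def RM (M : TCM) : Finset Rule :=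
  ({ruleS, ruleFloodProp, ruleSEnd, ruleGInit, ruleFloodGen M, ruleEx M} : Finset Rule) ∪
    (Finset.range M.p).biUnion fun i => {ruleR M i, ruleT M i, ruleGStep i}

/-- The alternating Datalog/non-Datalog chase steps `Step^X_n`. -/
def StepX (X : ChaseVariant) (M : TCM) : ℕ → Set Atom → Set Atom
  | 0, I => ChX X (DatRules (RM M)) I
  | n + 1, I => ChX X (DatRules (RM M)) (ChX X (NDatRules (RM M)) (StepX X M n I))

/-- The constant `w`, the "well of positivity". -/
def wC : FTerm := ct 0

/-- The instance `{End(w)}`. -/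
def IE : Set Atom := {(pEnd, [wC])}

/-- Membership in the signature of `R_M` (predicate together with its arity). -/
def InSig (M : TCM) (a : Atom) : Prop :=
  ((a.1 = pEnd ∨ a.1 = pFlood) ∧ a.2.length = 1) ∨
  ((a.1 = pS0 ∨ a.1 = pS ∨ a.1 = pG ∨ ∃ i < M.p, a.1 = pR i) ∧ a.2.length = 2) ∨
  ((∃ i < M.p, a.1 = pT i) ∧ a.2.length = 3)

/-- The critical instance: all atoms `P(w, …, w)` over the signature of `R_M`. -/
def Crit (M : TCM) : Set Atom := {a | InSig M a ∧ ∀ t ∈ a.2, t = wC}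

/-- An `S`-path of length `k` from `s` to `t` in `J`. -/
def SPath (J : Set Atom) : ℕ → FTerm → FTerm → Prop
  | 0, s, t => s = t
  | k + 1, s, t => ∃ u, (pS, [s, u]) ∈ J ∧ SPath J k u t

/-- The restriction `J|_S`: atoms of `J` all of whose terms belong to `S`. -/
def restrictTo (J : Set Atom) (S : Set FTerm) : Set Atom := {a ∈ J | ∀ t ∈ a.2, t ∈ S}

/-- An explicit injective encoding of three-counter machines by natural numbers. -/
def encodeTCM (M : TCM) : ℕ := Encodable.encode (M.m, M.δ)

/-! ### Part 1: basic lemmas -/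

lemma mem_atomVarsF {a : Atom} {v : Var} (h : Sum.inr v ∈ a.2) : v ∈ atomVarsF a := by
  simp only [atomVarsF, List.mem_toFinset, List.mem_filterMap]
  exact ⟨Sum.inr v, h, rfl⟩

lemma applyA_congr {σ τ : Subst} {a : Atom} (h : ∀ v ∈ atomVarsF a, σ v = τ v) :
    applyA σ a = applyA τ a := by
  unfold applyA
  refine congrArg _ (List.map_congr_left ?_)
  intro e he
  cases e with
  | inl c => rfl
  | inr v => exact h v (mem_atomVarsF he)

lemma mem_varsF_of_mem {A : Finset Atom} {a : Atom} (ha : a ∈ A) {v : Var}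
    (hv : v ∈ atomVarsF a) : v ∈ varsF A :=
  Finset.mem_biUnion.mpr ⟨a, ha, hv⟩

lemma instSeq_succ_subset (I : Set Atom) (steps : ℕ → Option Trigger) (n : ℕ) :
    instSeq I steps n ⊆ instSeq I steps (n + 1) := by
  intro x hx; exact Set.mem_union_left _ hx

lemma instSeq_mono (I : Set Atom) (steps : ℕ → Option Trigger) {m n : ℕ} (h : m ≤ n) :
    instSeq I steps m ⊆ instSeq I steps n := by
  induction n with
  | zero => simp_all
  | succ n ih =>
      rcases Nat.lt_or_ge m (n+1) with h' | h'
      · exact (ih (Nat.lt_succ_iff.mp h')).trans (instSeq_succ_subset I steps n)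
      · have : m = n + 1 := le_antisymm h h'
        subst this; exact fun x hx => hx

lemma self_subset_instSeq (I : Set Atom) (steps : ℕ → Option Trigger) (n : ℕ) :
    I ⊆ instSeq I steps n := instSeq_mono I steps (Nat.zero_le n)

lemma Deriv.inst_subset_res {Rset : Finset Rule} {I : Set Atom} (D : Deriv Rset I) (n : ℕ) :
    D.inst n ⊆ D.res := Set.subset_iUnion (fun n => D.inst n) n

lemma Deriv.self_subset_res {Rset : Finset Rule} {I : Set Atom} (D : Deriv Rset I) :
    I ⊆ D.res := D.inst_subset_res 0

lemma Deriv.inst_mono {Rset : Finset Rule} {I : Set Atom} (D : Deriv Rset I) {m n : ℕ}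
    (h : m ≤ n) : D.inst m ⊆ D.inst n := instSeq_mono I D.steps h

lemma Deriv.mem_res_iff {Rset : Finset Rule} {I : Set Atom} (D : Deriv Rset I) (x : Atom) :
    x ∈ D.res ↔ ∃ n, x ∈ D.inst n := Set.mem_iUnion

lemma subset_ChX (X : ChaseVariant) (Rset : Finset Rule) (J : Set Atom) :
    J ⊆ ChX X Rset J := by
  unfold ChX
  split
  · next h => exact h.choose.self_subset_res
  · exact fun x hx => hx

lemma subset_StepX (M : TCM) (I : Set Atom) : ∀ n, I ⊆ StepX ChaseVariant.SO M n I := by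
  intro n
  induction n with
  | zero => exact subset_ChX _ _ _
  | succ n ih =>
      exact ih.trans ((subset_ChX _ _ _).trans (subset_ChX _ _ _))

/-! congruence for triggers agreeing on body variables -/

lemma IsHomOn.mono {σ : Subst} {A B B' : Set Atom} (h : IsHomOn σ A B) (hBB' : B ⊆ B') :
    IsHomOn σ A B' := fun a ha => hBB' (h a ha)

lemma Trigger.isOn_mono {t : Trigger} {J J' : Set Atom} (h : t.isOn J) (hJJ' : J ⊆ J') :
    t.isOn J' := IsHomOn.mono h hJJ'

lemma isOn_congr {t₁ t₂ : Trigger} (hr : t₁.rule = t₂.rule)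
    (hs : ∀ v ∈ varsF t₁.rule.1, t₁.sub v = t₂.sub v) (J : Set Atom) :
    t₁.isOn J ↔ t₂.isOn J := by
  unfold Trigger.isOn IsHomOn
  rw [← hr]
  refine forall₂_congr (fun a ha => ?_)
  rw [applyA_congr (fun v hv => hs v (mem_varsF_of_mem ha hv))]

lemma code_congr {t₁ t₂ : Trigger} (hr : t₁.rule = t₂.rule)
    (hs : ∀ v ∈ varsF t₁.rule.1, t₁.sub v = t₂.sub v) : t₁.code = t₂.code := by
  unfold Trigger.code
  rw [← hr]
  congr 2
  exact Finset.image_congr (fun v hv => by rw [hs v hv])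

lemma extSub_congr {t₁ t₂ : Trigger} (hr : t₁.rule = t₂.rule)
    (hs : ∀ v ∈ varsF t₁.rule.1, t₁.sub v = t₂.sub v) : t₁.extSub = t₂.extSub := by
  funext v
  unfold Trigger.extSub
  rw [← hr, code_congr hr hs]
  split
  · next h => exact hs v h
  · rfl

lemma out_congr {t₁ t₂ : Trigger} (hr : t₁.rule = t₂.rule)
    (hs : ∀ v ∈ varsF t₁.rule.1, t₁.sub v = t₂.sub v) : t₁.out = t₂.out := by
  unfold Trigger.out
  rw [← hr, extSub_congr hr hs]

lemma applicable_SO_congr {t₁ t₂ : Trigger} (hr : t₁.rule = t₂.rule)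
    (hs : ∀ v ∈ varsF t₁.rule.1, t₁.sub v = t₂.sub v) (J : Set Atom) :
    Applicable ChaseVariant.SO t₁ J ↔ Applicable ChaseVariant.SO t₂ J := by
  show (∀ t' : Trigger, t'.rule = t₁.rule → t'.isOn J →
      (∀ v ∈ frontierOf t₁.rule, t'.sub v = t₁.sub v) → ¬ ((t'.out : Set Atom) ⊆ J)) ↔ _
  refine forall_congr' (fun t' => ?_)
  rw [← hr]
  refine imp_congr_right fun h1 => imp_congr_right fun h2 => imp_congr_left ?_
  refine forall₂_congr (fun v hv => ?_)
  rw [hs v (Finset.mem_of_mem_inter_left hv)]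

lemma not_applicable_of_out_subset {t : Trigger} {J : Set Atom} (hon : t.isOn J)
    (hout : (t.out : Set Atom) ⊆ J) : ¬ Applicable ChaseVariant.SO t J := by
  intro happ
  exact happ t rfl hon (fun v _ => rfl) hout

lemma not_out_subset_of_applicable {t : Trigger} {J : Set Atom} (hon : t.isOn J)
    (happ : Applicable ChaseVariant.SO t J) : ¬ ((t.out : Set Atom) ⊆ J) :=
  happ t rfl hon (fun v _ => rfl)

/-! ### Part 2: existence of a fair SO-derivation -/

/-- Build a trigger from a rule together with a list of values on the body variables. -/
def mkTrig (x : Rule × List FTerm) : Trigger :=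
  ⟨x.1, fun v =>
    ((((varsF x.1.1).toList.zip x.2).find? (fun p => decide (p.1 = v))).map Prod.snd).getD (vt 0)⟩

/-- Enumeration of (representatives of) all triggers. -/
def trigEnum (k : ℕ) : Trigger :=
  mkTrig ((Denumerable.eqv (Rule × List FTerm)).symm k)

lemma trigEnum_covers (t : Trigger) :
    ∃ k, (trigEnum k).rule = t.rule ∧ ∀ v ∈ varsF t.rule.1, (trigEnum k).sub v = t.sub v := by
  set l : List Var := (varsF t.rule.1).toList with hl
  refine ⟨(Denumerable.eqv (Rule × List FTerm)) (t.rule, l.map t.sub), ?_, ?_⟩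
  · simp [trigEnum, mkTrig]
  · intro v hv
    have hvl : v ∈ l := by rw [hl]; exact Finset.mem_toList.mpr hv
    have hz : l.zip (l.map t.sub) = l.map (fun w => (w, t.sub w)) := by
      have := List.zip_map' (f := id) (g := t.sub) (l := l)
      simpa using this
    have hfind : (l.zip (l.map t.sub)).find? (fun p => decide (p.1 = v))
        = some (v, t.sub v) := by
      rw [hz]
      have hsome : ((l.map fun w => (w, t.sub w)).find? (fun p => decide (p.1 = v))).isSome := by
        rw [List.find?_isSome]
        exact ⟨(v, t.sub v), List.mem_map_of_mem hvl, by simp⟩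
      obtain ⟨q, hq⟩ := Option.isSome_iff_exists.mp hsome
      have h1 : q.1 = v := by simpa using List.find?_some hq
      have h2 : q ∈ l.map fun w => (w, t.sub w) := List.mem_of_find?_eq_some hq
      obtain ⟨w, _, hw⟩ := List.mem_map.mp h2
      have : q = (v, t.sub v) := by
        rw [← hw] at h1 ⊢
        simp at h1
        rw [h1]
      rw [hq, this]
    simp only [trigEnum, Equiv.symm_apply_apply, mkTrig]
    rw [← hl, hfind]
    rfl

section FairExistence

variable (Rset : Finset Rule) (K : Set Atom)

/-- Indices of enumerated triggers that are applicable on `J`. -/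
def AppSet (J : Set Atom) : Set ℕ :=
  {k | (trigEnum k).rule ∈ Rset ∧ (trigEnum k).isOn J ∧ Applicable ChaseVariant.SO (trigEnum k) J}

def pickT (J : Set Atom) : Option Trigger :=
  if h : (AppSet Rset J).Nonempty then some (trigEnum (sInf (AppSet Rset J))) else none

def gSeq : ℕ → Set Atom
  | 0 => K
  | n + 1 => gSeq n ∪
      (match pickT Rset (gSeq n) with
        | none => (∅ : Set Atom)
        | some t => (t.out : Set Atom))

def stepsF (n : ℕ) : Option Trigger := pickT Rset (gSeq Rset K n)

lemma instSeq_gSeq : ∀ n, instSeq K (stepsF Rset K) n = gSeq Rset K n := by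
  intro n
  induction n with
  | zero => rfl
  | succ n ih =>
      show instSeq K (stepsF Rset K) n ∪ _ = gSeq Rset K n ∪ _
      rw [ih]
      rfl

lemma gSeq_mono {m n : ℕ} (h : m ≤ n) : gSeq Rset K m ⊆ gSeq Rset K n := by
  rw [← instSeq_gSeq, ← instSeq_gSeq]
  exact instSeq_mono _ _ h

lemma pickT_eq_some {J : Set Atom} {t : Trigger} (h : pickT Rset J = some t) :
    t ∈ Set.image trigEnum (AppSet Rset J) ∧
      t.rule ∈ Rset ∧ t.isOn J ∧ Applicable ChaseVariant.SO t J := by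
  unfold pickT at h
  split at h
  · next hne =>
      have hmem := Nat.sInf_mem hne
      cases h
      exact ⟨⟨_, hmem, rfl⟩, hmem⟩
  · exact absurd h (by simp)

/-- Once applied, an enumerated trigger is never applicable again. -/
lemma applied_not_applicable {n : ℕ} {t : Trigger}
    (h : pickT Rset (gSeq Rset K n) = some t) {j : ℕ} (hj : n < j) :
    ¬ Applicable ChaseVariant.SO t (gSeq Rset K j) := by
  obtain ⟨_, _, hon, happ⟩ := pickT_eq_some Rset h
  have hout : (t.out : Set Atom) ⊆ gSeq Rset K (n + 1) := by
    show (t.out : Set Atom) ⊆ gSeq Rset K n ∪ _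
    rw [h]
    exact Set.subset_union_right
  exact not_applicable_of_out_subset
    (Trigger.isOn_mono hon (gSeq_mono Rset K (Nat.le_of_lt hj)))
    (hout.trans (gSeq_mono Rset K hj))

noncomputable def fairDeriv : Deriv Rset K where
  steps := stepsF Rset K
  prefix_closed := by
    intro n hn
    have hA : ¬ (AppSet Rset (gSeq Rset K n)).Nonempty := by
      intro hne
      simp [stepsF, pickT, hne] at hn
    have hg : gSeq Rset K (n + 1) = gSeq Rset K n := by
      show gSeq Rset K n ∪ _ = _
      have : pickT Rset (gSeq Rset K n) = none := by simp [pickT, hA]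
      rw [this]
      exact Set.union_empty _
    show pickT Rset (gSeq Rset K (n+1)) = none
    rw [hg]
    simp [pickT, hA]
  valid := by
    intro n t h
    obtain ⟨_, h1, h2, h3⟩ := pickT_eq_some Rset h
    rw [instSeq_gSeq]
    exact ⟨h1, h2, not_out_subset_of_applicable h2 h3⟩

lemma fairDeriv_inst (n : ℕ) : (fairDeriv Rset K).inst n = gSeq Rset K n :=
  instSeq_gSeq Rset K n

lemma fairDeriv_isX : (fairDeriv Rset K).IsX ChaseVariant.SO := by
  intro n t h
  obtain ⟨_, _, _, h3⟩ := pickT_eq_some Rset h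
  rw [fairDeriv_inst]
  exact h3

lemma fairDeriv_fair : (fairDeriv Rset K).Fair ChaseVariant.SO := by
  intro i t hrule hon happ
  by_contra hcon
  push_neg at hcon
  rw [fairDeriv_inst] at hon happ
  simp only [fairDeriv_inst] at hcon
  obtain ⟨k, hkr, hks⟩ := trigEnum_covers t
  -- k is in AppSet at every stage j > i
  have hk : ∀ j, i < j → k ∈ AppSet Rset (gSeq Rset K j) := by
    intro j hj
    have honj : t.isOn (gSeq Rset K j) := Trigger.isOn_mono hon (gSeq_mono Rset K (Nat.le_of_lt hj))
    refine ⟨hkr ▸ hrule, ?_, ?_⟩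
    · exact (isOn_congr hkr (fun v hv => hks v (by rw [hkr] at hv; exact hv)) _).mpr honj
    · exact (applicable_SO_congr hkr (fun v hv => hks v (by rw [hkr] at hv; exact hv)) _).mpr
        (hcon j hj)
  -- hence a trigger is applied at every stage j > i, of index sInf ≤ k
  have hpick : ∀ j, i < j → (AppSet Rset (gSeq Rset K j)).Nonempty := fun j hj => ⟨k, hk j hj⟩
  set f : ℕ → ℕ := fun r => sInf (AppSet Rset (gSeq Rset K (i + 1 + r))) with hf
  have hfle : ∀ r, f r ≤ k := fun r => Nat.sInf_le (hk _ (by omega))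
  have hfstep : ∀ r, pickT Rset (gSeq Rset K (i + 1 + r)) = some (trigEnum (f r)) := by
    intro r
    simp [pickT, hpick (i + 1 + r) (by omega), hf]
  have hinj : ∀ r₁ r₂, r₁ < r₂ → f r₁ ≠ f r₂ := by
    intro r₁ r₂ hlt heq
    have hmem : f r₂ ∈ AppSet Rset (gSeq Rset K (i + 1 + r₂)) := Nat.sInf_mem (hpick _ (by omega))
    have hnap := applied_not_applicable Rset K (hfstep r₁) (j := i + 1 + r₂) (by omega)
    rw [heq] at hnap
    exact hnap hmem.2.2
  -- pigeonhole: r ↦ f r maps [0, k+1] injectively into [0, k]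
  have hcard : (Finset.range (k + 2)).card ≤ (Finset.range (k + 1)).card := by
    refine Finset.card_le_card_of_injOn f (fun r _ => Finset.mem_range.mpr (by
      have := hfle r; omega)) ?_
    intro r₁ _ r₂ _ heq
    by_contra hne
    rcases Nat.lt_or_ge r₁ r₂ with h | h
    · exact hinj r₁ r₂ h heq
    · exact hinj r₂ r₁ (by omega) heq.symm
  simp at hcard

lemma exists_fair_SO : ∃ D : Deriv Rset K, D.IsX ChaseVariant.SO ∧ D.Fair ChaseVariant.SO :=
  ⟨fairDeriv Rset K, fairDeriv_isX Rset K, fairDeriv_fair Rset K⟩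

end FairExistence

/-! ### Part 3: firing Datalog rules along a fair derivation -/

lemma mem_out_of_frontier {ρ : Rule} (hd : varsF ρ.2 ⊆ frontierOf ρ) (σ : Subst)
    {t' : Trigger} (hr : t'.rule = ρ) (hagree : ∀ v ∈ frontierOf ρ, t'.sub v = σ v)
    {h : Atom} (hh : h ∈ ρ.2) : applyA σ h ∈ (t'.out : Set Atom) := by
  have hmem : h ∈ t'.rule.2 := by rw [hr]; exact hh
  have : applyA t'.extSub h = applyA σ h := by
    refine applyA_congr (fun v hv => ?_)
    have hv2 : v ∈ varsF ρ.2 := mem_varsF_of_mem hh hv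
    have hvf : v ∈ frontierOf ρ := hd hv2
    have hvb : v ∈ varsF t'.rule.1 := by
      rw [hr]; exact Finset.mem_of_mem_inter_left hvf
    show t'.extSub v = σ v
    unfold Trigger.extSub
    rw [if_pos hvb]
    exact hagree v hvf
  rw [← this]
  exact Finset.mem_coe.mpr (Finset.mem_image_of_mem _ hmem)

lemma fire {Rset : Finset Rule} {K : Set Atom} (D : Deriv Rset K) (hfair : D.Fair ChaseVariant.SO)
    {ρ : Rule} (hρ : ρ ∈ Rset) (hd : varsF ρ.2 ⊆ frontierOf ρ) (σ : Subst) (i : ℕ)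
    (hb : IsHomOn σ (ρ.1 : Set Atom) (D.inst i)) {h : Atom} (hh : h ∈ ρ.2) :
    applyA σ h ∈ D.res := by
  set t : Trigger := ⟨ρ, σ⟩ with ht
  have hon : t.isOn (D.inst i) := hb
  by_cases happ : Applicable ChaseVariant.SO t (D.inst i)
  · obtain ⟨j, _, hnap⟩ := hfair i t hρ hon happ
    rw [show Applicable ChaseVariant.SO t (D.inst j) =
      ∀ t' : Trigger, t'.rule = t.rule → t'.isOn (D.inst j) →
        (∀ v ∈ frontierOf t.rule, t'.sub v = t.sub v) →
          ¬ ((t'.out : Set Atom) ⊆ D.inst j) from rfl] at hnap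
    push_neg at hnap
    obtain ⟨t', hr', _, hagree', hout'⟩ := hnap
    exact (D.inst_subset_res j) (hout' (mem_out_of_frontier hd σ hr' hagree' hh))
  · rw [show Applicable ChaseVariant.SO t (D.inst i) =
      ∀ t' : Trigger, t'.rule = t.rule → t'.isOn (D.inst i) →
        (∀ v ∈ frontierOf t.rule, t'.sub v = t.sub v) →
          ¬ ((t'.out : Set Atom) ⊆ D.inst i) from rfl] at happ
    push_neg at happ
    obtain ⟨t', hr', _, hagree', hout'⟩ := happ
    exact (D.inst_subset_res i) (hout' (mem_out_of_frontier hd σ hr' hagree' hh))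

/-! ### Part 3b: the soundness invariant -/

/-- The per-atom invariant. -/
def InvAt (I J : Set Atom) (x : Atom) : Prop :=
  (x.1 = pFlood → ∃ u, x = (pFlood, [u]) ∧
    ((pFlood, [u]) ∈ I ∨ (pEnd, [u]) ∈ I ∨ (∃ b, (pS, [b, u]) ∈ I) ∨ (∃ b, (pS0, [b, u]) ∈ J))) ∧
  (x.1 = pS → ∃ b u, x = (pS, [b, u]) ∧
    ((pS, [b, u]) ∈ I ∨ (pS0, [b, u]) ∈ J ∨ (b = u ∧ (pEnd, [u]) ∈ I))) ∧
  (x.1 = pEnd → x ∈ I)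

def ChaseInv (I J : Set Atom) : Prop := ∀ x ∈ J, InvAt I J x

lemma InvAt.mono {I J J' : Set Atom} (hJJ' : J ⊆ J') {x : Atom} (h : InvAt I J x) :
    InvAt I J' x := by
  obtain ⟨h1, h2, h3⟩ := h
  refine ⟨fun hx => ?_, fun hx => ?_, h3⟩
  · obtain ⟨u, hu, hc⟩ := h1 hx
    exact ⟨u, hu, by
      rcases hc with h | h | h | ⟨b, h⟩
      · exact Or.inl h
      · exact Or.inr (Or.inl h)
      · exact Or.inr (Or.inr (Or.inl h))
      · exact Or.inr (Or.inr (Or.inr ⟨b, hJJ' h⟩))⟩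
  · obtain ⟨b, u, hu, hc⟩ := h2 hx
    refine ⟨b, u, hu, ?_⟩
    rcases hc with h | h | h
    · exact Or.inl h
    · exact Or.inr (Or.inl (hJJ' h))
    · exact Or.inr (Or.inr h)

lemma InvAt_of_ne {I J : Set Atom} {x : Atom} (hF : x.1 ≠ pFlood) (hS : x.1 ≠ pS)
    (hE : x.1 ≠ pEnd) : InvAt I J x :=
  ⟨fun h => absurd h hF, fun h => absurd h hS, fun h => absurd h hE⟩

/-! ### Part 4: invariant preservation -/

lemma extSub_eq_sub (t : Trigger) {v : Var} (hv : v ∈ varsF t.rule.1) :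
    t.extSub v = t.sub v := by
  unfold Trigger.extSub; rw [if_pos hv]

lemma applyA_fst (σ : Subst) (a : Atom) : (applyA σ a).1 = a.1 := rfl

lemma InvAt_out {M : TCM} {I J : Set Atom} (hInv : ChaseInv I J) (t : Trigger)
    (hrule : t.rule ∈ RM M) (hon : t.isOn J) {x : Atom} (hx : x ∈ (t.out : Set Atom)) :
    InvAt I (J ∪ (t.out : Set Atom)) x := by
  obtain ⟨h, hh, hxeq⟩ := Finset.mem_image.mp (Finset.mem_coe.mp hx)
  simp only [RM, Finset.mem_union, Finset.mem_insert, Finset.mem_singleton,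
    Finset.mem_biUnion, Finset.mem_range] at hrule
  rcases hrule with (hr | hr | hr | hr | hr | hr) | ⟨i, hip, (hr | hr | hr)⟩
  · -- ruleS : S₀(x,y) → S(x,y)
    have h0 : t.extSub (Sum.inl 0) = t.sub (Sum.inl 0) := extSub_eq_sub t (by rw [hr]; decide)
    have h1 : t.extSub (Sum.inl 1) = t.sub (Sum.inl 1) := extSub_eq_sub t (by rw [hr]; decide)
    have hh' : h = (pS, [vt 0, vt 1]) := by rw [hr] at hh; simpa [ruleS] using hh
    have hxval : x = (pS, [t.sub (Sum.inl 0), t.sub (Sum.inl 1)]) := by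
      rw [← hxeq, hh']; simp [applyA, applyT, vt, h0, h1]
    have hbody : (pS0, [t.sub (Sum.inl 0), t.sub (Sum.inl 1)]) ∈ J := by
      have := hon (pS0, [vt 0, vt 1]) (by rw [hr]; simp [ruleS])
      simpa [applyA, applyT, vt] using this
    refine ⟨fun hxF => ?_, fun _ => ?_, fun hxE => ?_⟩
    · rw [hxval] at hxF; simp [pS, pFlood] at hxF
    · exact ⟨_, _, hxval, Or.inr (Or.inl (Set.mem_union_left _ hbody))⟩
    · rw [hxval] at hxE; simp [pS, pEnd] at hxE
  · -- ruleFloodProp : S(x,y) → Flood(y)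
    have h1 : t.extSub (Sum.inl 1) = t.sub (Sum.inl 1) := extSub_eq_sub t (by rw [hr]; decide)
    have hh' : h = (pFlood, [vt 1]) := by rw [hr] at hh; simpa [ruleFloodProp] using hh
    have hxval : x = (pFlood, [t.sub (Sum.inl 1)]) := by
      rw [← hxeq, hh']; simp [applyA, applyT, vt, h1]
    have hbody : (pS, [t.sub (Sum.inl 0), t.sub (Sum.inl 1)]) ∈ J := by
      have := hon (pS, [vt 0, vt 1]) (by rw [hr]; simp [ruleFloodProp])
      simpa [applyA, applyT, vt] using this
    obtain ⟨b, u, hbu, hc⟩ := (hInv _ hbody).2.1 rfl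
    have hb : b = t.sub (Sum.inl 0) := by simp [Prod.ext_iff] at hbu; tauto
    have hu : u = t.sub (Sum.inl 1) := by simp [Prod.ext_iff] at hbu; tauto
    subst hb hu
    refine ⟨fun _ => ?_, fun hxS => ?_, fun hxE => ?_⟩
    · refine ⟨_, hxval, ?_⟩
      rcases hc with h' | h' | h'
      · exact Or.inr (Or.inr (Or.inl ⟨_, h'⟩))
      · exact Or.inr (Or.inr (Or.inr ⟨_, Set.mem_union_left _ h'⟩))
      · exact Or.inr (Or.inl (h'.1 ▸ h'.2))
    · rw [hxval] at hxS; simp [pS, pFlood] at hxS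
    · rw [hxval] at hxE; simp [pEnd, pFlood] at hxE
  · -- ruleSEnd : End(x) → S(x,x)
    have h0 : t.extSub (Sum.inl 0) = t.sub (Sum.inl 0) := extSub_eq_sub t (by rw [hr]; decide)
    have hh' : h = (pS, [vt 0, vt 0]) := by rw [hr] at hh; simpa [ruleSEnd] using hh
    have hxval : x = (pS, [t.sub (Sum.inl 0), t.sub (Sum.inl 0)]) := by
      rw [← hxeq, hh']; simp [applyA, applyT, vt, h0]
    have hbody : (pEnd, [t.sub (Sum.inl 0)]) ∈ J := by
      have := hon (pEnd, [vt 0]) (by rw [hr]; simp [ruleSEnd])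
      simpa [applyA, applyT, vt] using this
    have hEndI : (pEnd, [t.sub (Sum.inl 0)]) ∈ I := (hInv _ hbody).2.2 rfl
    refine ⟨fun hxF => ?_, fun _ => ?_, fun hxE => ?_⟩
    · rw [hxval] at hxF; simp [pS, pFlood] at hxF
    · exact ⟨_, _, hxval, Or.inr (Or.inr ⟨rfl, hEndI⟩)⟩
    · rw [hxval] at hxE; simp [pS, pEnd] at hxE
  · -- ruleGInit : head G
    have hh' : h = (pG, [vt 0, vt 1]) := by rw [hr] at hh; simpa [ruleGInit] using hh
    have hx1 : x.1 = pG := by rw [← hxeq, applyA_fst, hh']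
    exact InvAt_of_ne (by rw [hx1]; decide) (by rw [hx1]; decide) (by rw [hx1]; decide)
  · -- ruleFloodGen : heads G, R_j, T_j
    rw [hr] at hh
    simp only [ruleFloodGen, Finset.mem_union, Finset.mem_singleton, Finset.mem_biUnion,
      Finset.mem_range, Finset.mem_insert] at hh
    have hx1 : (x.1 = pG ∨ ∃ j, x.1 = pR j ∨ x.1 = pT j) := by
      rw [← hxeq, applyA_fst]
      rcases hh with hh | ⟨j, _, hh | hh⟩
      · left; rw [hh]
      · right; exact ⟨j, Or.inl (by rw [hh])⟩
      · right; exact ⟨j, Or.inr (by rw [hh])⟩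
    rcases hx1 with hx1 | ⟨j, hx1 | hx1⟩ <;>
      exact InvAt_of_ne (by rw [hx1]; simp only [pG, pR, pT, pFlood]; omega)
        (by rw [hx1]; simp only [pG, pR, pT, pS]; omega)
        (by rw [hx1]; simp only [pG, pR, pT, pEnd]; omega)
  · -- ruleEx : heads S₀, R₀, T_j
    rw [hr] at hh
    simp only [ruleEx, Finset.mem_union, Finset.mem_singleton, Finset.mem_biUnion,
      Finset.mem_range, Finset.mem_insert] at hh
    have hx1 : (x.1 = pS0 ∨ x.1 = pR 0 ∨ ∃ j, x.1 = pT j) := by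
      rw [← hxeq, applyA_fst]
      rcases hh with (hh | hh) | ⟨j, _, hh⟩
      · left; rw [hh]
      · right; left; rw [hh]
      · right; right; exact ⟨j, by rw [hh]⟩
    rcases hx1 with hx1 | hx1 | ⟨j, hx1⟩ <;>
      exact InvAt_of_ne (by rw [hx1]; simp only [pS0, pR, pT, pFlood]; omega)
        (by rw [hx1]; simp only [pS0, pR, pT, pS]; omega)
        (by rw [hx1]; simp only [pS0, pR, pT, pEnd]; omega)
  · -- ruleR : head R_{i+1}
    have hh' : h = (pR ((i + 1) % M.p), [vt 0, vt 2]) := by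
      rw [hr] at hh; simpa [ruleR] using hh
    have hx1 : x.1 = pR ((i + 1) % M.p) := by rw [← hxeq, applyA_fst, hh']
    exact InvAt_of_ne (by rw [hx1]; simp only [pR, pFlood]; omega)
      (by rw [hx1]; simp only [pR, pS]; omega) (by rw [hx1]; simp only [pR, pEnd]; omega)
  · -- ruleT : head T_i
    have hh' : h = (pT i, [vt 0, vt 3, vt 4]) := by rw [hr] at hh; simpa [ruleT] using hh
    have hx1 : x.1 = pT i := by rw [← hxeq, applyA_fst, hh']
    exact InvAt_of_ne (by rw [hx1]; simp only [pT, pFlood]; omega)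
      (by rw [hx1]; simp only [pT, pS]; omega) (by rw [hx1]; simp only [pT, pEnd]; omega)
  · -- ruleGStep : head G
    have hh' : h = (pG, [vt 0, vt 2]) := by rw [hr] at hh; simpa [ruleGStep] using hh
    have hx1 : x.1 = pG := by rw [← hxeq, applyA_fst, hh']
    exact InvAt_of_ne (by rw [hx1]; decide) (by rw [hx1]; decide) (by rw [hx1]; decide)

lemma ChaseInv_union_out {M : TCM} {I J : Set Atom} (hInv : ChaseInv I J) (t : Trigger)
    (hrule : t.rule ∈ RM M) (hon : t.isOn J) : ChaseInv I (J ∪ (t.out : Set Atom)) := by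
  intro x hx
  rcases hx with hx | hx
  · exact (hInv x hx).mono Set.subset_union_left
  · exact InvAt_out hInv t hrule hon hx

/-! ### Part 5: invariant through the chase -/

lemma ChaseInv_base {M : TCM} {I : Finset Atom} (hI : ∀ a ∈ I, InSig M a) :
    ChaseInv (↑I) (↑I) := by
  intro x hx
  have hxI : x ∈ I := hx
  have hsig := hI x hxI
  refine ⟨fun hxF => ?_, fun hxS => ?_, fun _ => hx⟩
  · have hlen : x.2.length = 1 := by
      rcases hsig with ⟨_, h⟩ | ⟨(h | h | h | ⟨i, _, h⟩), _⟩ | ⟨⟨i, _, h⟩, _⟩ <;>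
        first
          | assumption
          | (rw [hxF] at h; simp only [pFlood, pS0, pS, pG, pR, pT] at h; omega)
    obtain ⟨u, hu⟩ := List.length_eq_one_iff.mp hlen
    have hx2 : x = (pFlood, [u]) := by
      rcases x with ⟨x1, x2⟩; simp only at hxF hu; rw [hxF, hu]
    exact ⟨u, hx2, Or.inl (by rw [← hx2]; exact hx)⟩
  · have hlen : x.2.length = 2 := by
      rcases hsig with ⟨(h | h), _⟩ | ⟨_, h⟩ | ⟨⟨i, _, h⟩, _⟩ <;>
        first
          | assumption
          | (rw [hxS] at h; simp only [pFlood, pEnd, pS, pT] at h; omega)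
    obtain ⟨b, u, hu⟩ := List.length_eq_two.mp hlen
    have hx2 : x = (pS, [b, u]) := by
      rcases x with ⟨x1, x2⟩; simp only at hxS hu; rw [hxS, hu]
    exact ⟨b, u, hx2, Or.inl (by rw [← hx2]; exact hx)⟩

lemma ChaseInv_instSeq {M : TCM} {I : Set Atom} {Rset : Finset Rule} (hsub : Rset ⊆ RM M)
    {K : Set Atom} (D : Deriv Rset K) (hK : ChaseInv I K) : ∀ n, ChaseInv I (D.inst n) := by
  intro n
  induction n with
  | zero => exact hK
  | succ n ih =>
      cases hs : D.steps n with
      | none =>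
          have he : D.inst (n + 1) = D.inst n ∪ ∅ := by
            show instSeq K D.steps (n + 1) = _
            unfold instSeq
            rw [hs]
            rfl
          rw [he, Set.union_empty]
          exact ih
      | some t =>
          obtain ⟨h1, h2, _⟩ := D.valid n t hs
          have he : D.inst (n + 1) = D.inst n ∪ (t.out : Set Atom) := by
            show instSeq K D.steps (n + 1) = _
            unfold instSeq
            rw [hs]
            rfl
          rw [he]
          exact ChaseInv_union_out ih t (hsub h1) h2

lemma ChaseInv_res {M : TCM} {I : Set Atom} {Rset : Finset Rule} (hsub : Rset ⊆ RM M)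
    {K : Set Atom} (D : Deriv Rset K) (hK : ChaseInv I K) : ChaseInv I D.res := by
  intro x hx
  obtain ⟨n, hn⟩ := (D.mem_res_iff x).mp hx
  exact (ChaseInv_instSeq hsub D hK n x hn).mono (D.inst_subset_res n)

lemma ChaseInv_ChX {M : TCM} {I : Set Atom} {Rset : Finset Rule} (hsub : Rset ⊆ RM M)
    {K : Set Atom} (hK : ChaseInv I K) : ChaseInv I (ChX ChaseVariant.SO Rset K) := by
  unfold ChX
  split
  · next h => exact ChaseInv_res hsub h.choose hK
  · exact hK

lemma ChaseInv_StepX (M : TCM) (I : Finset Atom) (hI : ∀ a ∈ I, InSig M a) :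
    ∀ n, ChaseInv (↑I) (StepX ChaseVariant.SO M n ↑I) := by
  intro n
  induction n with
  | zero => exact ChaseInv_ChX (Finset.filter_subset _ _) (ChaseInv_base hI)
  | succ n ih =>
      exact ChaseInv_ChX (Finset.filter_subset _ _)
        (ChaseInv_ChX (Finset.filter_subset _ _) ih)

/-! ### Part 5b: rule membership and firing of the specific Datalog rules -/

lemma ruleS_mem_Dat (M : TCM) : ruleS ∈ DatRules (RM M) :=
  Finset.mem_filter.mpr ⟨by simp [RM], by decide⟩

lemma ruleFloodProp_mem_Dat (M : TCM) : ruleFloodProp ∈ DatRules (RM M) :=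
  Finset.mem_filter.mpr ⟨by simp [RM], by decide⟩

lemma ruleSEnd_mem_Dat (M : TCM) : ruleSEnd ∈ DatRules (RM M) :=
  Finset.mem_filter.mpr ⟨by simp [RM], by decide⟩

lemma flood_mem_res {M : TCM} {K : Set Atom} {D : Deriv (DatRules (RM M)) K}
    (hfair : D.Fair ChaseVariant.SO) {b u : FTerm} {i : ℕ} (hS : (pS, [b, u]) ∈ D.inst i) :
    (pFlood, [u]) ∈ D.res := by
  set σ : Subst := fun v => match v with | Sum.inl 0 => b | _ => u with hσ
  have hb : IsHomOn σ (ruleFloodProp.1 : Set Atom) (D.inst i) := by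
    intro a ha
    have : a = (pS, [vt 0, vt 1]) := by simpa [ruleFloodProp] using ha
    rw [this]
    exact hS
  have := fire D hfair (ruleFloodProp_mem_Dat M) (by decide) σ i hb
    (h := (pFlood, [vt 1])) (by decide)
  exact this

lemma flood_of_S_res {M : TCM} {K : Set Atom} {D : Deriv (DatRules (RM M)) K}
    (hfair : D.Fair ChaseVariant.SO) {b u : FTerm} (hS : (pS, [b, u]) ∈ D.res) :
    (pFlood, [u]) ∈ D.res := by
  obtain ⟨i, hi⟩ := (D.mem_res_iff _).mp hS
  exact flood_mem_res hfair hi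

lemma s_of_S0_res {M : TCM} {K : Set Atom} {D : Deriv (DatRules (RM M)) K}
    (hfair : D.Fair ChaseVariant.SO) {b u : FTerm} (hS0 : (pS0, [b, u]) ∈ D.res) :
    (pS, [b, u]) ∈ D.res := by
  obtain ⟨i, hi⟩ := (D.mem_res_iff _).mp hS0
  set σ : Subst := fun v => match v with | Sum.inl 0 => b | _ => u with hσ
  have hb : IsHomOn σ (ruleS.1 : Set Atom) (D.inst i) := by
    intro a ha
    have : a = (pS0, [vt 0, vt 1]) := by simpa [ruleS] using ha
    rw [this]
    exact hi
  exact fire D hfair (ruleS_mem_Dat M) (by decide) σ i hb (h := (pS, [vt 0, vt 1])) (by decide)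

lemma s_of_End_res {M : TCM} {K : Set Atom} {D : Deriv (DatRules (RM M)) K}
    (hfair : D.Fair ChaseVariant.SO) {u : FTerm} (hE : (pEnd, [u]) ∈ D.res) :
    (pS, [u, u]) ∈ D.res := by
  obtain ⟨i, hi⟩ := (D.mem_res_iff _).mp hE
  set σ : Subst := fun _ => u with hσ
  have hb : IsHomOn σ (ruleSEnd.1 : Set Atom) (D.inst i) := by
    intro a ha
    have : a = (pEnd, [vt 0]) := by simpa [ruleSEnd] using ha
    rw [this]
    exact hi
  exact fire D hfair (ruleSEnd_mem_Dat M) (by decide) σ i hb (h := (pS, [vt 0, vt 0])) (by decide)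

/-- characterization of the `Flood`-atoms of `Step^SO_n(I)`. -/
theorem stmt_15 (M : TCM) (I : Finset Atom) (hI : ∀ a ∈ I, InSig M a) (n : ℕ)
    (mlen : FTerm → ℕ) (chain : FTerm → ℕ → FTerm)
    (hbase : ∀ a ∈ adom (I : Set Atom), mlen a ≤ n ∧ chain a 0 = a)
    (hinj : ∀ a ∈ adom (I : Set Atom), ∀ b ∈ adom (I : Set Atom), ∀ i ≤ mlen a, ∀ j ≤ mlen b,
      chain a i = chain b j → a = b ∧ i = j)
    (hadom : adom (StepX ChaseVariant.SO M n (I : Set Atom)) =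
      {t | ∃ a ∈ adom (I : Set Atom), ∃ i ≤ mlen a, t = chain a i})
    (hS0 : {x ∈ StepX ChaseVariant.SO M n (I : Set Atom) | x.1 = pS0} =
      {x : Atom | (x ∈ I ∧ x.1 = pS0) ∨
        ∃ a ∈ adom (I : Set Atom), ∃ i < mlen a, x = (pS0, [chain a (i + 1), chain a i])}) :
    {x ∈ StepX ChaseVariant.SO M n (I : Set Atom) | x.1 = pFlood} =
      {x : Atom | ∃ u : FTerm, x = (pFlood, [u]) ∧
        (((pFlood, [u]) ∈ I ∨ (pEnd, [u]) ∈ I) ∨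
         (∃ b : FTerm, (pS, [b, u]) ∈ I ∨ (pS0, [b, u]) ∈ I) ∨
         (∃ a ∈ adom (I : Set Atom), ∃ i < mlen a, u = chain a i))} := by
  obtain ⟨K, hIK, hKform⟩ : ∃ K : Set Atom, (↑I : Set Atom) ⊆ K ∧
      StepX ChaseVariant.SO M n (↑I : Set Atom) = ChX ChaseVariant.SO (DatRules (RM M)) K := by
    cases n with
    | zero => exact ⟨↑I, subset_rfl, rfl⟩
    | succ n =>
        exact ⟨ChX ChaseVariant.SO (NDatRules (RM M)) (StepX ChaseVariant.SO M n ↑I),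
          (subset_StepX M ↑I n).trans (subset_ChX _ _ _), rfl⟩
  have hex : ∃ D : Deriv (DatRules (RM M)) K, D.IsX ChaseVariant.SO ∧ D.Fair ChaseVariant.SO :=
    exists_fair_SO _ K
  have hChX : ChX ChaseVariant.SO (DatRules (RM M)) K = hex.choose.res := by
    unfold ChX
    rw [dif_pos hex]
  set D := hex.choose with hD
  have hfair : D.Fair ChaseVariant.SO := hex.choose_spec.2
  have hres : StepX ChaseVariant.SO M n (↑I : Set Atom) = D.res := by rw [hKform, hChX]
  have hInvF := ChaseInv_StepX M I hI n
  apply Set.eq_of_subset_of_subset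
  · rintro x ⟨hxF, hx1⟩
    obtain ⟨u, hshape, hc⟩ := (hInvF x hxF).1 hx1
    refine ⟨u, hshape, ?_⟩
    rcases hc with h | h | ⟨b, h⟩ | ⟨b, h⟩
    · exact Or.inl (Or.inl h)
    · exact Or.inl (Or.inr h)
    · exact Or.inr (Or.inl ⟨b, Or.inl h⟩)
    · have hmem : (pS0, [b, u]) ∈ {x ∈ StepX ChaseVariant.SO M n (↑I : Set Atom) | x.1 = pS0} :=
        ⟨h, rfl⟩
      rw [hS0] at hmem
      rcases hmem with ⟨hmemI, _⟩ | ⟨a, ha, i, hi, heq⟩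
      · exact Or.inr (Or.inl ⟨b, Or.inr hmemI⟩)
      · have hu : u = chain a i := by
          simp only [Prod.mk.injEq, List.cons.injEq] at heq
          tauto
        exact Or.inr (Or.inr ⟨a, ha, i, hi, hu⟩)
  · rintro x ⟨u, hshape, hc⟩
    refine ⟨?_, by rw [hshape]⟩
    rw [hshape, hres]
    rcases hc with (h | h) | ⟨b, (h | h)⟩ | ⟨a, ha, i, hi, hu⟩
    · exact D.self_subset_res (hIK h)
    · exact flood_of_S_res hfair (s_of_End_res hfair (D.self_subset_res (hIK h)))
    · exact flood_of_S_res hfair (D.self_subset_res (hIK h))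
    · exact flood_of_S_res hfair (s_of_S0_res hfair (D.self_subset_res (hIK h)))
    · have hmem : (pS0, [chain a (i + 1), chain a i]) ∈
          {x ∈ StepX ChaseVariant.SO M n (↑I : Set Atom) | x.1 = pS0} := by
        rw [hS0]
        exact Or.inr ⟨a, ha, i, hi, rfl⟩
      rw [hres] at hmem
      subst hu
      exact flood_of_S_res hfair (s_of_S0_res hfair hmem.1)

end
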